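/- Let d ≥ 1, let Θ: ℤ^d × ℤ^d × ℤ^d → ℂ satisfy sup_{j,k,ℓ∈ℤ^d} |Θ(j,k,ℓ)| ⟨|j−k|+|j−ℓ|⟩^{2N} < ∞ for some N > d, let 1 ≤ p, q ≤ ∞ and 1 ≤ r < ∞ with 1/p + 1/q = 1/r, and let b = {b_k}_{k∈ℤ^d} be a bounded sequence with b_j = 0 for all |j| > j₁ (some j₁ ∈ ℕ). Then for every ε > 0 there exists j₀ ∈ ℕ, depending only on ε, j₁, ‖b‖_{ℓ^∞}, N, d, p, q, r, and the above supremum of Θ, such that (Σ_{|j| > j₀} |([𝒯_Θ, b]₁(f,g))_j|^r)^{1/r} < ε for all f ∈ ℓ^p(ℤ^d) and g ∈ ℓ^q(ℤ^d) with ‖f‖_{ℓ^p} ≤ 1 and ‖g‖_{ℓ^q} ≤ 1. -/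

import Mathlib

open scoped ENNReal NNReal BigOperators

noncomputable section

/-- The integer lattice `ℤ^d`. -/
abbrev Zd (d : ℕ) := Fin d → ℤ

/-- Euclidean norm `|j|` of an integer vector `j ∈ ℤ^d`. -/
def znorm {d : ℕ} (j : Zd d) : ℝ := Real.sqrt (∑ i, ((j i : ℝ)) ^ 2)

/-- Euclidean norm of a real vector. -/
def rnorm {d : ℕ} (x : Fin d → ℝ) : ℝ := Real.sqrt (∑ i, (x i) ^ 2)

/-- Japanese bracket `⟨x⟩ = (1 + x²)^{1/2}`. -/
def jb (x : ℝ) : ℝ := Real.sqrt (1 + x ^ 2)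

/-- The discrete bilinear operator `𝒯_Θ` (named `Tbil` here) associated with an infinite tensor `Θ`:
`(𝒯_Θ(f,g))_j = Σ_k Σ_ℓ Θ(j,k,ℓ) f_k g_ℓ`. -/
def Tbil {d : ℕ} (Θ : Zd d → Zd d → Zd d → ℂ) (f g : Zd d → ℂ) : Zd d → ℂ :=
  fun j => ∑' k, ∑' l, Θ j k l * f k * g l

/-- `ℓ^p`-type norm (extended-real valued) of a family of nonnegative extended reals,
with the usual modification (supremum) when `p = ∞`. -/
def nestNorm {ι : Type*} (p : ℝ≥0∞) (F : ι → ℝ≥0∞) : ℝ≥0∞ :=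
  if p = ∞ then ⨆ i, F i else (∑' i, F i ^ p.toReal) ^ (1 / p.toReal)

/-- The weighted `ℓ^p_s(ℤ^d)` norm `(Σ_k ⟨k⟩^{sp} |f_k|^p)^{1/p}`. -/
def wlpNorm {d : ℕ} (p : ℝ≥0∞) (s : ℝ) (f : Zd d → ℂ) : ℝ≥0∞ :=
  nestNorm p fun k => ENNReal.ofReal (jb (znorm k) ^ s * ‖f k‖)

/-- The `ℓ^p(ℤ^d)` norm. -/
def lpNorm {d : ℕ} (p : ℝ≥0∞) (f : Zd d → ℂ) : ℝ≥0∞ :=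
  nestNorm p fun k => ENNReal.ofReal ‖f k‖

/-- The tensor norm `‖Θ‖_{ω,N} = sup_{j,k,ℓ} |Θ(j,k,ℓ)| ⟨|j−k|+|j−ℓ|⟩^{2N} /
(⟨|j|+|k|⟩^ω ⟨|j|+|ℓ|⟩^ω)`. -/
def tensorNorm {d : ℕ} (ω N : ℝ) (Θ : Zd d → Zd d → Zd d → ℂ) : ℝ≥0∞ :=
  ⨆ j, ⨆ k, ⨆ l, ENNReal.ofReal
    (‖Θ j k l‖ * jb (znorm (j - k) + znorm (j - l)) ^ (2 * N) /
      (jb (znorm j + znorm k) ^ ω * jb (znorm j + znorm l) ^ ω))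

/-- The tensor norm `‖Θ‖_{ω₁,ω₂,N}`. -/
def tensorNorm2 {d : ℕ} (ω₁ ω₂ N : ℝ) (Θ : Zd d → Zd d → Zd d → ℂ) : ℝ≥0∞ :=
  ⨆ j, ⨆ k, ⨆ l, ENNReal.ofReal
    (‖Θ j k l‖ * jb (znorm (j - k) + znorm (j - l)) ^ (2 * N) /
      (jb (znorm j + znorm k) ^ ω₁ * jb (znorm j + znorm l) ^ ω₂))

/-- The tensor norm `‖Θ‖_{0,0,ω,N} = sup_{j,k,ℓ} |Θ(j,k,ℓ)| ⟨|j−k|+|j−ℓ|⟩^{2N} /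
⟨|j|+|k|+|ℓ|⟩^ω`. -/
def tensorNorm00 {d : ℕ} (ω N : ℝ) (Θ : Zd d → Zd d → Zd d → ℂ) : ℝ≥0∞ :=
  ⨆ j, ⨆ k, ⨆ l, ENNReal.ofReal
    (‖Θ j k l‖ * jb (znorm (j - k) + znorm (j - l)) ^ (2 * N) /
      jb (znorm j + znorm k + znorm l) ^ ω)

/-- The first bilinear commutator `[𝒯_Θ, b]₁(f,g) = 𝒯_Θ(bf, g) − b·𝒯_Θ(f,g)`. -/
def comm1 {d : ℕ} (Θ : Zd d → Zd d → Zd d → ℂ) (b f g : Zd d → ℂ) : Zd d → ℂ :=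
  fun j => Tbil Θ (fun k => b k * f k) g j - b j * Tbil Θ f g j

/-- The second bilinear commutator `[𝒯_Θ, b]₂(f,g) = 𝒯_Θ(f, bg) − b·𝒯_Θ(f,g)`. -/
def comm2 {d : ℕ} (Θ : Zd d → Zd d → Zd d → ℂ) (b f g : Zd d → ℂ) : Zd d → ℂ :=
  fun j => Tbil Θ f (fun l => b l * g l) j - b j * Tbil Θ f g j

/-- One-step finite difference in the variables `(j,k)`, with shift `v ∈ ℤ^d`:
`(D2 v Θ)(j,k,ℓ) = Θ(j+v, k+v, ℓ) − Θ(j,k,ℓ)`. -/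
def D2 {d : ℕ} (v : Zd d) (Θ : Zd d → Zd d → Zd d → ℂ) : Zd d → Zd d → Zd d → ℂ :=
  fun j k l => Θ (j + v) (k + v) l - Θ j k l

/-- One-step finite difference in the variables `(j,ℓ)`, with shift `v ∈ ℤ^d`:
`(D3 v Θ)(j,k,ℓ) = Θ(j+v, k, ℓ+v) − Θ(j,k,ℓ)`. -/
def D3 {d : ℕ} (v : Zd d) (Θ : Zd d → Zd d → Zd d → ℂ) : Zd d → Zd d → Zd d → ℂ :=
  fun j k l => Θ (j + v) k (l + v) - Θ j k l

/-- The iterated partial finite difference operator `Δ₂^α` for `α ∈ ℤ^d`: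
in direction `m`, `Δ_{2,m}^t = (Δ₂^{m, sign t})^{|t|}`. -/
def Delta2 {d : ℕ} (α : Zd d) (Θ : Zd d → Zd d → Zd d → ℂ) : Zd d → Zd d → Zd d → ℂ :=
  (List.finRange d).foldr
    (fun m F => (D2 (Pi.single m (Int.sign (α m))))^[(α m).natAbs] ∘ F) id Θ

/-- The iterated partial finite difference operator `Δ₃^β` for `β ∈ ℤ^d`. -/
def Delta3 {d : ℕ} (β : Zd d) (Θ : Zd d → Zd d → Zd d → ℂ) : Zd d → Zd d → Zd d → ℂ :=
  (List.finRange d).foldr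
    (fun m F => (D3 (Pi.single m (Int.sign (β m))))^[(β m).natAbs] ∘ F) id Θ

/-- `|α| = Σ_m |α_m|` for `α ∈ ℤ^d`. -/
def l1norm {d : ℕ} (α : Zd d) : ℝ := ∑ m, |(α m : ℝ)|

/-- The bilinear tensor class `BT^{ω,N}(ℤ^d)`:
`|Δ₂^α Δ₃^β Θ(j,k,ℓ)| ≤ C_{N,α,β} ⟨|j|+|k|+|ℓ|⟩^{ω−|α|−|β|} ⟨|j−k|+|j−ℓ|⟩^{−2N}`. -/
def BT {d : ℕ} (ω : ℝ) (N : ℕ) (Θ : Zd d → Zd d → Zd d → ℂ) : Prop :=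
  ∀ α β : Zd d, ∃ C : ℝ, 0 < C ∧ ∀ j k l : Zd d,
    ‖Delta2 α (Delta3 β Θ) j k l‖ ≤
      C * jb (znorm j + znorm k + znorm l) ^ (ω - l1norm α - l1norm β) *
        jb (znorm (j - k) + znorm (j - l)) ^ (-(2 * (N : ℝ)))

/-- The bilinear tensor class of order zero, `BT^0(ℤ^d) = ∪_{N > d} BT^{0,N}(ℤ^d)`. -/
def BT0 {d : ℕ} (Θ : Zd d → Zd d → Zd d → ℂ) : Prop :=
  ∃ N : ℕ, d < N ∧ BT 0 N Θ

/-- Directional derivative of a function on `ℝ^d × ℝ^d` in the direction `v`. -/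
def pDeriv {d : ℕ} (v : (Fin d → ℝ) × (Fin d → ℝ))
    (F : (Fin d → ℝ) × (Fin d → ℝ) → ℂ) : (Fin d → ℝ) × (Fin d → ℝ) → ℂ :=
  fun p => fderiv ℝ F p v

/-- Iterated partial derivative `∂_x^α` in the first group of variables. -/
def pdx {d : ℕ} (α : Fin d → ℕ) :
    ((Fin d → ℝ) × (Fin d → ℝ) → ℂ) → (Fin d → ℝ) × (Fin d → ℝ) → ℂ :=
  (List.finRange d).foldr (fun m G => (pDeriv (Pi.single m 1, 0))^[α m] ∘ G) id

/-- Iterated partial derivative `∂_y^β` in the second group of variables. -/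
def pdy {d : ℕ} (β : Fin d → ℕ) :
    ((Fin d → ℝ) × (Fin d → ℝ) → ℂ) → (Fin d → ℝ) × (Fin d → ℝ) → ℂ :=
  (List.finRange d).foldr (fun m G => (pDeriv (0, Pi.single m 1))^[β m] ∘ G) id


/-! ### Auxiliary lemmas -/

section Aux

lemma my_jb_one_le (x : ℝ) : 1 ≤ jb x := by
  rw [jb]; nth_rewrite 1 [show (1:ℝ) = Real.sqrt 1 by simp]
  exact Real.sqrt_le_sqrt (by nlinarith [sq_nonneg x])

lemma my_jb_pos (x : ℝ) : 0 < jb x := lt_of_lt_of_le one_pos (my_jb_one_le x)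

lemma my_jb_sq (x : ℝ) : jb x ^ 2 = 1 + x ^ 2 := Real.sq_sqrt (by positivity)

lemma my_jb_mono {x y : ℝ} (hx : 0 ≤ x) (h : x ≤ y) : jb x ≤ jb y :=
  Real.sqrt_le_sqrt (by nlinarith)

lemma my_znorm_nonneg {d : ℕ} (j : Zd d) : 0 ≤ znorm j := Real.sqrt_nonneg _

lemma my_znorm_sq {d : ℕ} (j : Zd d) : znorm j ^ 2 = ∑ i, ((j i : ℝ)) ^ 2 :=
  Real.sq_sqrt (Finset.sum_nonneg fun _ _ => sq_nonneg _)

def myEmb {d : ℕ} (j : Zd d) : EuclideanSpace ℝ (Fin d) :=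
  (WithLp.equiv 2 (Fin d → ℝ)).symm (fun i => (j i : ℝ))

lemma my_znorm_eq_norm {d : ℕ} (j : Zd d) : znorm j = ‖myEmb j‖ := by
  rw [EuclideanSpace.norm_eq, znorm]
  congr 1
  refine Finset.sum_congr rfl fun i _ => ?_
  rw [Real.norm_eq_abs, sq_abs]
  rfl

lemma my_emb_sub {d : ℕ} (j k : Zd d) : myEmb (j - k) = myEmb j - myEmb k := by
  ext i
  simp only [myEmb, WithLp.equiv, Equiv.refl_symm, Equiv.refl_apply]
  show ((j - k) i : ℝ) = _
  rw [Pi.sub_apply]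
  push_cast
  rfl

lemma my_znorm_sub_le {d : ℕ} (j k : Zd d) : znorm j - znorm k ≤ znorm (j - k) := by
  rw [my_znorm_eq_norm, my_znorm_eq_norm, my_znorm_eq_norm, my_emb_sub]
  exact norm_sub_norm_le _ _

lemma my_abs_coord_le_znorm {d : ℕ} (j : Zd d) (i : Fin d) : |(j i : ℝ)| ≤ znorm j := by
  rw [← Real.sqrt_sq_eq_abs]
  exact Real.sqrt_le_sqrt (Finset.single_le_sum (f := fun i => ((j i:ℝ))^2)
    (fun i _ => sq_nonneg _) (Finset.mem_univ i))

lemma my_jb_mul_le_jb_add_sq {a b : ℝ} (ha : 0 ≤ a) (hb : 0 ≤ b) :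
    jb a * jb b ≤ jb (a + b) ^ 2 := by
  have h1 : (jb a * jb b) ^ 2 ≤ (jb (a+b) ^ 2) ^ 2 := by
    rw [mul_pow, my_jb_sq, my_jb_sq, my_jb_sq]
    nlinarith [sq_nonneg (a*b), sq_nonneg (a+b), sq_nonneg (a-b), mul_nonneg ha hb]
  nlinarith [mul_pos (my_jb_pos a) (my_jb_pos b), pow_pos (my_jb_pos (a+b)) 2]

lemma my_jb_peetre (a b : ℝ) : jb (a + b) ≤ Real.sqrt 2 * jb a * jb b := by
  have h2 : (0:ℝ) ≤ 2 := by norm_num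
  rw [jb, jb, jb, ← Real.sqrt_mul h2, ← Real.sqrt_mul (by positivity)]
  apply Real.sqrt_le_sqrt
  nlinarith [sq_nonneg (a - b), sq_nonneg (a*b), sq_nonneg (a+b)]

lemma my_jb_add_rpow_ge {a b : ℝ} (ha : 0 ≤ a) (hb : 0 ≤ b) {N : ℝ} (hN : 0 ≤ N) :
    jb a ^ N * jb b ^ N ≤ jb (a + b) ^ (2 * N) := by
  rw [← Real.mul_rpow (my_jb_pos a).le (my_jb_pos b).le,
    show (2:ℝ) * N = ((2:ℕ):ℝ) * N by norm_num,
    Real.rpow_mul (my_jb_pos (a+b)).le, Real.rpow_natCast]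
  exact Real.rpow_le_rpow (mul_nonneg (my_jb_pos a).le (my_jb_pos b).le)
    (my_jb_mul_le_jb_add_sq ha hb) hN

lemma my_summable_one_dim {s : ℝ} (hs : 1/2 < s) :
    Summable (fun n : ℤ => (1 + (n:ℝ)^2) ^ (-s)) := by
  have hb : 1 < 2*s := by linarith
  have h1 : Summable (fun n : ℤ => |(n:ℝ)| ^ (-(2*s))) := Real.summable_abs_int_rpow hb
  have h2 : Summable (fun n : ℤ => if n = 0 then (1:ℝ) else 0) := by
    apply summable_of_ne_finset_zero (s := {0})
    intro n hn
    simp at hn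
    simp [hn]
  refine Summable.of_nonneg_of_le (fun n => by positivity) (fun n => ?_) (h1.add h2)
  by_cases hn : n = 0
  · subst hn
    simp only [Int.cast_zero, abs_zero, if_pos rfl]
    rw [Real.zero_rpow (by intro h; linarith [neg_eq_zero.mp h]),
      show ((1:ℝ)+0^2)=1 by norm_num, Real.one_rpow]
    norm_num
  · have hn' : (1:ℝ) ≤ |(n:ℝ)| := by
      rw [← Int.cast_abs]
      exact_mod_cast Int.one_le_abs (by simpa using hn)
    have key : (1 + (n:ℝ)^2)^(-s) ≤ |(n:ℝ)| ^ (-(2*s)) := by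
      rw [show (-(2*s)) = ((2:ℕ):ℝ) * (-s) by push_cast; ring,
        Real.rpow_mul (abs_nonneg _), Real.rpow_natCast, sq_abs]
      apply Real.rpow_le_rpow_of_nonpos (by positivity) (by nlinarith) (by linarith)
    simp only [hn, if_false, add_zero]
    exact key

lemma my_summable_prod_dim : ∀ (d : ℕ) {s : ℝ}, 1/2 < s →
    Summable (fun m : Zd d => ∏ i, (1 + ((m i:ℝ))^2) ^ (-s)) := by
  intro d
  induction d with
  | zero => intro s _; simp [Summable]; exact ⟨_, hasSum_fintype _⟩
  | succ n ih =>
    intro s hs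
    have h1 := (my_summable_one_dim hs).mul_of_nonneg (ih hs)
      (fun n => by positivity) (fun m => Finset.prod_nonneg fun i _ => by positivity)
    rw [← (Fin.consEquiv (fun _ : Fin (n+1) => ℤ)).summable_iff]
    apply h1.congr
    intro x
    obtain ⟨a, m⟩ := x
    show _ = ∏ i, (1 + (((Fin.cons a m : Fin (n+1) → ℤ) i : ℝ))^2) ^ (-s)
    rw [Fin.prod_univ_succ]
    simp only [Fin.cons_zero, Fin.cons_succ]

lemma my_summable_jb_znorm {d : ℕ} {N : ℝ} (hN : (d:ℝ) < N) (hd : 1 ≤ d) :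
    Summable (fun m : Zd d => jb (znorm m) ^ (-N)) := by
  set s : ℝ := N / (2*d) with hs_def
  have hd' : (0:ℝ) < d := by exact_mod_cast hd
  have hs : 1/2 < s := by
    rw [hs_def, lt_div_iff₀ (by linarith)]
    nlinarith
  refine Summable.of_nonneg_of_le (fun m => Real.rpow_nonneg (my_jb_pos _).le _)
    (fun m => ?_) (my_summable_prod_dim d hs)
  have hsum_nonneg : (0:ℝ) ≤ ∑ i, ((m i:ℝ))^2 := Finset.sum_nonneg fun _ _ => sq_nonneg _
  have hjb : jb (znorm m) ^ (-N) = (1 + ∑ i, ((m i:ℝ))^2) ^ (-(N/2)) := by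
    have h2 : jb (znorm m) ^ (2:ℝ) = 1 + ∑ i, ((m i:ℝ))^2 := by
      rw [show (2:ℝ) = ((2:ℕ):ℝ) by norm_num, Real.rpow_natCast, my_jb_sq, my_znorm_sq]
    calc jb (znorm m) ^ (-N) = (jb (znorm m) ^ (2:ℝ)) ^ (-(N/2)) := by
          rw [← Real.rpow_mul (my_jb_pos _).le]; ring_nf
      _ = _ := by rw [h2]
  have hprod : ∏ i, (1 + ((m i:ℝ))^2) ≤ (1 + ∑ i, ((m i:ℝ))^2) ^ (d:ℕ) := by
    calc ∏ i, (1 + ((m i:ℝ))^2) ≤ ∏ _i : Fin d, (1 + ∑ i, ((m i:ℝ))^2) := by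
          apply Finset.prod_le_prod (fun i _ => by positivity)
          intro i _
          have : ((m i:ℝ))^2 ≤ ∑ i, ((m i:ℝ))^2 :=
            Finset.single_le_sum (f := fun i => ((m i:ℝ))^2) (fun i _ => sq_nonneg _)
              (Finset.mem_univ i)
          linarith
      _ = (1 + ∑ i, ((m i:ℝ))^2) ^ (d:ℕ) := by
          rw [Finset.prod_const, Finset.card_univ, Fintype.card_fin]
  have hstep : (1 + ∑ i, ((m i:ℝ))^2) ^ (-(N/2)) ≤ (∏ i, (1 + ((m i:ℝ))^2)) ^ (-s) := by
    have h1 : (∏ i, (1 + ((m i:ℝ))^2)) ^ (-s) = ((∏ i, (1 + ((m i:ℝ))^2)) ^ s)⁻¹ := by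
      rw [← Real.rpow_neg (Finset.prod_nonneg fun i _ => by positivity)]
    have h2 : (1 + ∑ i, ((m i:ℝ))^2) ^ (-(N/2)) = ((1 + ∑ i, ((m i:ℝ))^2) ^ (N/2))⁻¹ := by
      rw [← Real.rpow_neg (by positivity)]
    rw [h1, h2]
    apply inv_anti₀
    · positivity
    · calc (∏ i, (1 + ((m i:ℝ))^2)) ^ s
          ≤ ((1 + ∑ i, ((m i:ℝ))^2) ^ (d:ℕ)) ^ s :=
            Real.rpow_le_rpow (Finset.prod_nonneg fun i _ => by positivity) hprod (by linarith)
        _ = (1 + ∑ i, ((m i:ℝ))^2) ^ (N/2) := by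
            rw [← Real.rpow_natCast (1 + ∑ i, ((m i:ℝ))^2) d, ← Real.rpow_mul (by positivity)]
            congr 1
            field_simp [hs_def]
            rw [hs_def, mul_div_assoc', div_mul_eq_mul_div, div_eq_iff (mul_pos two_pos hd').ne']
            ring
  calc jb (znorm m) ^ (-N) ≤ (∏ i, (1 + ((m i:ℝ))^2)) ^ (-s) := hjb ▸ hstep
    _ = ∏ i, (1 + ((m i:ℝ))^2) ^ (-s) :=
        (Real.finset_prod_rpow _ _ (fun i _ => by positivity) _).symm

lemma my_norm_tsum_le {ι : Type*} (h : ι → ℂ) : ‖∑' i, h i‖ ≤ ∑' i, ‖h i‖ := by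
  by_cases hs : Summable (fun i => ‖h i‖)
  · exact norm_tsum_le_tsum_norm hs
  · rw [tsum_eq_zero_of_not_summable (fun hsum => hs (summable_norm_iff.mpr hsum)),
      tsum_eq_zero_of_not_summable hs]
    simp

lemma my_lp_bound {d : ℕ} {p : ℝ≥0∞} (hp : 1 ≤ p) {f : Zd d → ℂ}
    (hf : lpNorm p f ≤ 1) (k : Zd d) : ‖f k‖ ≤ 1 := by
  rw [← ENNReal.ofReal_le_one]
  by_cases hp' : p = ∞
  · subst hp'
    rw [lpNorm, nestNorm, if_pos rfl] at hf
    exact le_trans (le_iSup (fun k => ENNReal.ofReal ‖f k‖) k) hf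
  · rw [lpNorm, nestNorm, if_neg hp'] at hf
    set t := p.toReal with ht_def
    have ht1 : 1 ≤ t := by
      have := ENNReal.toReal_mono hp' hp
      simpa using this
    have ht0 : 0 < t := lt_of_lt_of_le one_pos ht1
    have h1 : (∑' k, ENNReal.ofReal ‖f k‖ ^ t) ≤ 1 := by
      have h := ENNReal.rpow_le_rpow hf ht0.le
      rwa [← ENNReal.rpow_mul, one_div, inv_mul_cancel₀ (ne_of_gt ht0),
        ENNReal.rpow_one, ENNReal.one_rpow] at h
    have h2 : ENNReal.ofReal ‖f k‖ ^ t ≤ 1 := le_trans (ENNReal.le_tsum k) h1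
    calc ENNReal.ofReal ‖f k‖ = (ENNReal.ofReal ‖f k‖ ^ t) ^ (1/t) := by
          rw [← ENNReal.rpow_mul, mul_one_div, div_self (ne_of_gt ht0), ENNReal.rpow_one]
      _ ≤ 1 ^ (1/t) := ENNReal.rpow_le_rpow h2 (by positivity)
      _ = 1 := ENNReal.one_rpow _

lemma my_finite_ball {d : ℕ} (c : ℝ) : {k : Zd d | znorm k ≤ c}.Finite := by
  apply Set.Finite.subset (Set.finite_Icc (fun _ : Fin d => -⌈c⌉) (fun _ => ⌈c⌉))
  intro k hk
  simp only [Set.mem_setOf_eq] at hk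
  simp only [Set.mem_Icc, Pi.le_def]
  constructor
  · intro i
    have h1 : |(k i : ℝ)| ≤ c := le_trans (my_abs_coord_le_znorm k i) hk
    have h2 : -((⌈c⌉:ℤ) : ℝ) ≤ (k i : ℝ) := by
      have h3 := Int.le_ceil c
      have h4 := neg_abs_le (k i : ℝ)
      push_cast
      linarith
    exact_mod_cast h2
  · intro i
    have h1 : |(k i : ℝ)| ≤ c := le_trans (my_abs_coord_le_znorm k i) hk
    have h2 : (k i : ℝ) ≤ ((⌈c⌉:ℤ) : ℝ) := by
      have h3 := Int.le_ceil c
      have h4 := le_abs_self (k i : ℝ)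
      linarith
    exact_mod_cast h2

lemma my_rpow_neg_le {u v N : ℝ} (hu : 0 < u) (huv : u ≤ v) (hN : 0 ≤ N) :
    v ^ (-N) ≤ u ^ (-N) := by
  rw [Real.rpow_neg hu.le, Real.rpow_neg (hu.trans_le huv).le]
  exact inv_anti₀ (Real.rpow_pos_of_pos hu N) (Real.rpow_le_rpow hu.le huv hN)

lemma my_div_rpow_neg {a b N : ℝ} (ha : 0 < a) (hb : 0 < b) :
    (a / b) ^ (-N) = a ^ (-N) * b ^ N := by
  rw [Real.rpow_neg (div_nonneg ha.le hb.le), Real.div_rpow ha.le hb.le,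
    Real.rpow_neg ha.le, inv_div, div_eq_mul_inv, mul_comm]

lemma my_jb_shift {N : ℝ} (hN : 0 ≤ N) {x u y c : ℝ} (hx : 0 ≤ x) (hy : 0 ≤ y)
    (hyc : y ≤ c) (hxuy : x ≤ u + y) :
    jb u ^ (-N) ≤ (Real.sqrt 2 * jb c) ^ N * jb x ^ (-N) := by
  have h2 : (0:ℝ) < Real.sqrt 2 := by positivity
  have hden : (0:ℝ) < Real.sqrt 2 * jb c := mul_pos h2 (my_jb_pos c)
  have key : jb x / (Real.sqrt 2 * jb c) ≤ jb u := by
    rw [div_le_iff₀ hden]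
    calc jb x ≤ jb (u + y) := my_jb_mono hx hxuy
      _ ≤ Real.sqrt 2 * jb u * jb y := my_jb_peetre u y
      _ ≤ jb u * (Real.sqrt 2 * jb c) := by
          have hyc' := my_jb_mono hy hyc
          calc Real.sqrt 2 * jb u * jb y ≤ Real.sqrt 2 * jb u * jb c :=
                mul_le_mul_of_nonneg_left hyc' (mul_nonneg h2.le (my_jb_pos u).le)
            _ = jb u * (Real.sqrt 2 * jb c) := by ring
  have hpos : 0 < jb x / (Real.sqrt 2 * jb c) := div_pos (my_jb_pos x) hden
  calc jb u ^ (-N) ≤ (jb x / (Real.sqrt 2 * jb c)) ^ (-N) := my_rpow_neg_le hpos key hN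
    _ = jb x ^ (-N) * (Real.sqrt 2 * jb c) ^ N := my_div_rpow_neg (my_jb_pos x) hden
    _ = (Real.sqrt 2 * jb c) ^ N * jb x ^ (-N) := mul_comm _ _

lemma my_tsum_translate {d : ℕ} (h : Zd d → ℝ) (j : Zd d) :
    ∑' l, h (j - l) = ∑' m, h m := (Equiv.subLeft j).tsum_eq h

lemma my_summable_translate {d : ℕ} {h : Zd d → ℝ} (hs : Summable h) (j : Zd d) :
    Summable (fun l => h (j - l)) := (Equiv.subLeft j).summable_iff.mpr hs

end Aux

/-- uniform smallness of the tails of `[𝒯_Θ, b]₁(f,g)` in `ℓ^r`, for `b`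
bounded and supported in `{|j| ≤ j₁}`, uniformly over `‖f‖_{ℓ^p} ≤ 1`, `‖g‖_{ℓ^q} ≤ 1`. -/
theorem stmt_9 {d : ℕ} (hd : 1 ≤ d) (N : ℝ) (hN : (d : ℝ) < N)
    (Θ : Zd d → Zd d → Zd d → ℂ)
    (hΘ : (⨆ j : Zd d, ⨆ k : Zd d, ⨆ l : Zd d,
      ENNReal.ofReal (‖Θ j k l‖ * jb (znorm (j - k) + znorm (j - l)) ^ (2 * N))) ≠ ∞)
    (p q r : ℝ≥0∞) (hp : 1 ≤ p) (hq : 1 ≤ q) (hr : 1 ≤ r) (hr' : r ≠ ∞)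
    (hpqr : p⁻¹ + q⁻¹ = r⁻¹)
    (b : Zd d → ℂ) (j₁ : ℕ) (hb : ∀ j : Zd d, (j₁ : ℝ) < znorm j → b j = 0) :
    ∀ ε : ℝ, 0 < ε → ∃ j₀ : ℕ, ∀ f g : Zd d → ℂ,
      lpNorm p f ≤ 1 → lpNorm q g ≤ 1 →
        (∑' j : {j : Zd d // (j₀ : ℝ) < znorm j},
            ENNReal.ofReal ‖comm1 Θ b f g j.1‖ ^ r.toReal) ^ (1 / r.toReal)
          < ENNReal.ofReal ε := by
  -- constants extracted from the hypotheses
  have hN0 : (0:ℝ) < N := lt_of_le_of_lt (Nat.cast_nonneg d) hN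
  set C : ℝ := (⨆ j : Zd d, ⨆ k : Zd d, ⨆ l : Zd d,
      ENNReal.ofReal (‖Θ j k l‖ * jb (znorm (j - k) + znorm (j - l)) ^ (2 * N))).toReal with hCdef
  have hC : ∀ j k l : Zd d,
      ‖Θ j k l‖ * jb (znorm (j - k) + znorm (j - l)) ^ (2 * N) ≤ C := by
    intro j k l
    rw [hCdef, ← ENNReal.ofReal_le_iff_le_toReal hΘ]
    calc ENNReal.ofReal (‖Θ j k l‖ * jb (znorm (j - k) + znorm (j - l)) ^ (2 * N))
        ≤ ⨆ l : Zd d, ENNReal.ofReal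
            (‖Θ j k l‖ * jb (znorm (j - k) + znorm (j - l)) ^ (2 * N)) :=
          le_iSup (fun l => ENNReal.ofReal
            (‖Θ j k l‖ * jb (znorm (j - k) + znorm (j - l)) ^ (2 * N))) l
      _ ≤ ⨆ k : Zd d, ⨆ l : Zd d, ENNReal.ofReal
            (‖Θ j k l‖ * jb (znorm (j - k) + znorm (j - l)) ^ (2 * N)) :=
          le_iSup (fun k => ⨆ l : Zd d, ENNReal.ofReal
            (‖Θ j k l‖ * jb (znorm (j - k) + znorm (j - l)) ^ (2 * N))) k
      _ ≤ _ :=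
          le_iSup (fun j => ⨆ k : Zd d, ⨆ l : Zd d, ENNReal.ofReal
            (‖Θ j k l‖ * jb (znorm (j - k) + znorm (j - l)) ^ (2 * N))) j
  have hC0 : 0 ≤ C := ENNReal.toReal_nonneg
  have hΘbd : ∀ j k l : Zd d,
      ‖Θ j k l‖ ≤ C * (jb (znorm (j - k)) ^ (-N) * jb (znorm (j - l)) ^ (-N)) := by
    intro j k l
    have h1 : jb (znorm (j-k)) ^ N * jb (znorm (j-l)) ^ N
        ≤ jb (znorm (j-k) + znorm (j-l)) ^ (2*N) :=
      my_jb_add_rpow_ge (my_znorm_nonneg _) (my_znorm_nonneg _) hN0.le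
    have h2 : ‖Θ j k l‖ * (jb (znorm (j-k)) ^ N * jb (znorm (j-l)) ^ N) ≤ C :=
      le_trans (mul_le_mul_of_nonneg_left h1 (norm_nonneg _)) (hC j k l)
    have hk := Real.rpow_pos_of_pos (my_jb_pos (znorm (j-k))) N
    have hl := Real.rpow_pos_of_pos (my_jb_pos (znorm (j-l))) N
    rw [Real.rpow_neg (my_jb_pos _).le, Real.rpow_neg (my_jb_pos _).le,
      show C * ((jb (znorm (j-k)) ^ N)⁻¹ * (jb (znorm (j-l)) ^ N)⁻¹)
        = C / (jb (znorm (j-k)) ^ N * jb (znorm (j-l)) ^ N) by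
          field_simp,
      le_div_iff₀ (mul_pos hk hl)]
    exact h2
  -- the support of b
  have hball : {k : Zd d | znorm k ≤ (j₁:ℝ)}.Finite := my_finite_ball _
  set Kf : Finset (Zd d) := hball.toFinset with hKfdef
  have hbK : ∀ k : Zd d, k ∉ Kf → b k = 0 := by
    intro k hk
    refine hb k (lt_of_not_ge fun hle => hk ?_)
    rw [hKfdef, Set.Finite.mem_toFinset]
    exact hle
  set B : ℝ≥0 := Kf.sup fun k => ‖b k‖₊ with hBdef
  have hbB : ∀ k, ‖b k‖ ≤ (B:ℝ) := by
    intro k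
    by_cases hk : k ∈ Kf
    · exact_mod_cast NNReal.coe_le_coe.mpr (Finset.le_sup (f := fun k => ‖b k‖₊) hk)
    · rw [hbK k hk]; simp
  -- the summable majorant
  have hh : Summable (fun m : Zd d => jb (znorm m) ^ (-N)) := my_summable_jb_znorm hN hd
  set S : ℝ := ∑' m : Zd d, jb (znorm m) ^ (-N) with hSdef
  have hS0 : 0 ≤ S := tsum_nonneg fun m => Real.rpow_nonneg (my_jb_pos _).le _
  have hP0 : 0 ≤ (Real.sqrt 2 * jb (j₁:ℝ)) ^ N :=
    Real.rpow_nonneg (mul_nonneg (Real.sqrt_nonneg 2) (my_jb_pos _).le) N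
  set M : ℝ := (Kf.card : ℝ) * (C * (B:ℝ) * S * (Real.sqrt 2 * jb (j₁:ℝ)) ^ N) with hMdef
  have hM0 : 0 ≤ M :=
    mul_nonneg (Nat.cast_nonneg _)
      (mul_nonneg (mul_nonneg (mul_nonneg hC0 B.coe_nonneg) hS0) hP0)
  -- pointwise estimate on the commutator, beyond the support of b
  have hpoint : ∀ f g : Zd d → ℂ, (∀ k, ‖f k‖ ≤ 1) → (∀ l, ‖g l‖ ≤ 1) →
      ∀ j : Zd d, (j₁:ℝ) < znorm j → ‖comm1 Θ b f g j‖ ≤ M * jb (znorm j) ^ (-N) := by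
    intro f g hf hg j hj
    have hbj : b j = 0 := hb j hj
    have hcomm : comm1 Θ b f g j = ∑' k, ∑' l, Θ j k l * (b k * f k) * g l := by
      simp only [comm1, Tbil, hbj, zero_mul, sub_zero]
    have hA0 : ∀ k ∉ Kf, (∑' l, Θ j k l * (b k * f k) * g l) = 0 := by
      intro k hk
      simp [hbK k hk]
    have hAk : ∀ k ∈ Kf, ‖∑' l, Θ j k l * (b k * f k) * g l‖
        ≤ C * (B:ℝ) * S * ((Real.sqrt 2 * jb (j₁:ℝ)) ^ N * jb (znorm j) ^ (-N)) := by
      intro k hk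
      have hknorm : znorm k ≤ (j₁:ℝ) := by
        have := hk
        rw [hKfdef, Set.Finite.mem_toFinset] at this
        exact this
      have hjkpos := Real.rpow_pos_of_pos (my_jb_pos (znorm (j-k))) (-N)
      have hdom : Summable (fun l : Zd d =>
          C * jb (znorm (j-k)) ^ (-N) * (B:ℝ) * jb (znorm (j-l)) ^ (-N)) :=
        (my_summable_translate hh j).mul_left _
      have hterm : ∀ l, ‖Θ j k l * (b k * f k) * g l‖
          ≤ C * jb (znorm (j-k)) ^ (-N) * (B:ℝ) * jb (znorm (j-l)) ^ (-N) := by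
        intro l
        have h1 := hΘbd j k l
        have h2 := hbB k
        have h3 := hf k
        have h4 := hg l
        have hjl := Real.rpow_pos_of_pos (my_jb_pos (znorm (j-l))) (-N)
        calc ‖Θ j k l * (b k * f k) * g l‖ = ‖Θ j k l‖ * (‖b k‖ * ‖f k‖) * ‖g l‖ := by
              rw [norm_mul, norm_mul, norm_mul]
          _ ≤ (C * (jb (znorm (j-k)) ^ (-N) * jb (znorm (j-l)) ^ (-N))) * ((B:ℝ) * 1) * 1 := by
              apply mul_le_mul (mul_le_mul h1 (mul_le_mul h2 h3 (norm_nonneg _)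
                B.coe_nonneg) (mul_nonneg (norm_nonneg _) (norm_nonneg _))
                (le_trans (norm_nonneg _) h1)) h4 (norm_nonneg _)
              have := le_trans (mul_nonneg (norm_nonneg (b k)) (norm_nonneg (f k)))
                (le_of_eq rfl)
              positivity
          _ = C * jb (znorm (j-k)) ^ (-N) * (B:ℝ) * jb (znorm (j-l)) ^ (-N) := by ring
      have hsumm : Summable (fun l => ‖Θ j k l * (b k * f k) * g l‖) :=
        Summable.of_nonneg_of_le (fun l => norm_nonneg _) hterm hdom
      have hshift : jb (znorm (j-k)) ^ (-N)
          ≤ (Real.sqrt 2 * jb (j₁:ℝ)) ^ N * jb (znorm j) ^ (-N) := by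
        apply my_jb_shift hN0.le (my_znorm_nonneg j) (my_znorm_nonneg k) hknorm
        have := my_znorm_sub_le j k
        linarith
      calc ‖∑' l, Θ j k l * (b k * f k) * g l‖
          ≤ ∑' l, ‖Θ j k l * (b k * f k) * g l‖ := norm_tsum_le_tsum_norm hsumm
        _ ≤ ∑' l, C * jb (znorm (j-k)) ^ (-N) * (B:ℝ) * jb (znorm (j-l)) ^ (-N) :=
            Summable.tsum_le_tsum hterm hsumm hdom
        _ = C * jb (znorm (j-k)) ^ (-N) * (B:ℝ) * S := by
            rw [tsum_mul_left, hSdef, my_tsum_translate (fun m => jb (znorm m) ^ (-N)) j]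
        _ = C * (B:ℝ) * S * (jb (znorm (j-k)) ^ (-N)) := by ring
        _ ≤ C * (B:ℝ) * S * ((Real.sqrt 2 * jb (j₁:ℝ)) ^ N * jb (znorm j) ^ (-N)) := by
            apply mul_le_mul_of_nonneg_left hshift
            exact mul_nonneg (mul_nonneg hC0 B.coe_nonneg) hS0
    rw [hcomm, tsum_eq_sum hA0]
    calc ‖∑ k ∈ Kf, ∑' l, Θ j k l * (b k * f k) * g l‖
        ≤ ∑ k ∈ Kf, ‖∑' l, Θ j k l * (b k * f k) * g l‖ := norm_sum_le _ _
      _ ≤ ∑ _k ∈ Kf, C * (B:ℝ) * S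
            * ((Real.sqrt 2 * jb (j₁:ℝ)) ^ N * jb (znorm j) ^ (-N)) :=
          Finset.sum_le_sum hAk
      _ = M * jb (znorm j) ^ (-N) := by
          rw [Finset.sum_const, nsmul_eq_mul, hMdef]; ring
  -- the exponent r
  intro ε hε
  have hrt1 : 1 ≤ r.toReal := by
    have := ENNReal.toReal_mono hr' hr
    simpa using this
  have hrt0 : 0 < r.toReal := lt_of_lt_of_le one_pos hrt1
  set rt : ℝ := r.toReal with hrtdef
  -- choice of the cutoff
  set M₁ : ℝ := max M 1 with hM₁def
  have hM₁1 : (1:ℝ) ≤ M₁ := le_max_right _ _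
  have hM₁pos : (0:ℝ) < M₁ := lt_of_lt_of_le one_pos hM₁1
  set δ : ℝ := ((ε/2) ^ rt) / (M₁ ^ rt + 1) with hδdef
  have hM₁rt : (0:ℝ) < M₁ ^ rt := Real.rpow_pos_of_pos hM₁pos rt
  have hδpos : 0 < δ := div_pos (Real.rpow_pos_of_pos (by linarith) rt) (by linarith)
  have hhE : (∑' m : Zd d, ENNReal.ofReal (jb (znorm m) ^ (-N))) ≠ ∞ := by
    rw [← ENNReal.ofReal_tsum_of_nonneg (fun m => Real.rpow_nonneg (my_jb_pos _).le _) hh]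
    exact ENNReal.ofReal_ne_top
  have hev : ∀ᶠ s : Finset (Zd d) in Filter.atTop,
      (∑' j : {j : Zd d // j ∉ s}, ENNReal.ofReal (jb (znorm j.1) ^ (-N)))
        < ENNReal.ofReal δ :=
    (ENNReal.tendsto_tsum_compl_atTop_zero hhE).eventually_lt_const
      (by simpa using ENNReal.ofReal_pos.mpr hδpos)
  obtain ⟨s₀, hs₀⟩ := Filter.eventually_atTop.mp hev
  refine ⟨max j₁ (s₀.sup fun k => ⌈znorm k⌉₊), ?_⟩
  set j₀ : ℕ := max j₁ (s₀.sup fun k => ⌈znorm k⌉₊) with hj₀def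
  intro f g hfp hgq
  have hf1 : ∀ k, ‖f k‖ ≤ 1 := fun k => my_lp_bound hp hfp k
  have hg1 : ∀ l, ‖g l‖ ≤ 1 := fun l => my_lp_bound hq hgq l
  have hsub : {j : Zd d | (j₀:ℝ) < znorm j} ⊆ {j : Zd d | j ∉ s₀} := by
    intro j hj
    simp only [Set.mem_setOf_eq] at hj ⊢
    intro hmem
    have h1 : znorm j ≤ ((⌈znorm j⌉₊ : ℕ) : ℝ) := Nat.le_ceil _
    have h2 : (⌈znorm j⌉₊ : ℕ) ≤ j₀ :=
      le_trans (Finset.le_sup (f := fun k => ⌈znorm k⌉₊) hmem) (le_max_right _ _)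
    have h3 : znorm j ≤ (j₀:ℝ) := le_trans h1 (by exact_mod_cast h2)
    linarith
  have hj₁j₀ : (j₁:ℝ) ≤ (j₀:ℝ) := by exact_mod_cast le_max_left j₁ _
  -- pointwise ENNReal bound on the tail
  have hptE : ∀ j : {j : Zd d // (j₀:ℝ) < znorm j},
      ENNReal.ofReal ‖comm1 Θ b f g j.1‖ ^ rt
        ≤ ENNReal.ofReal (M₁ ^ rt) * ENNReal.ofReal (jb (znorm j.1) ^ (-N)) := by
    rintro ⟨j, hj⟩
    have hj1 : (j₁:ℝ) < znorm j := lt_of_le_of_lt hj₁j₀ hj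
    have hjbpos := Real.rpow_pos_of_pos (my_jb_pos (znorm j)) (-N)
    have h1 : ‖comm1 Θ b f g j‖ ≤ M₁ * jb (znorm j) ^ (-N) :=
      le_trans (hpoint f g hf1 hg1 j hj1)
        (mul_le_mul_of_nonneg_right (le_max_left _ _) hjbpos.le)
    have hM₁jb : 0 ≤ M₁ * jb (znorm j) ^ (-N) := mul_nonneg hM₁pos.le hjbpos.le
    calc ENNReal.ofReal ‖comm1 Θ b f g j‖ ^ rt
        ≤ ENNReal.ofReal (M₁ * jb (znorm j) ^ (-N)) ^ rt :=
          ENNReal.rpow_le_rpow (ENNReal.ofReal_le_ofReal h1) hrt0.le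
      _ = ENNReal.ofReal ((M₁ * jb (znorm j) ^ (-N)) ^ rt) :=
          ENNReal.ofReal_rpow_of_nonneg hM₁jb hrt0.le
      _ ≤ ENNReal.ofReal (M₁ ^ rt * jb (znorm j) ^ (-N)) := by
          apply ENNReal.ofReal_le_ofReal
          rw [Real.mul_rpow hM₁pos.le hjbpos.le]
          apply mul_le_mul_of_nonneg_left ?_ (Real.rpow_nonneg hM₁pos.le rt)
          rw [← Real.rpow_mul (my_jb_pos _).le]
          apply Real.rpow_le_rpow_of_exponent_le (my_jb_one_le _)
          nlinarith
      _ = ENNReal.ofReal (M₁ ^ rt) * ENNReal.ofReal (jb (znorm j) ^ (-N)) :=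
          ENNReal.ofReal_mul (Real.rpow_nonneg hM₁pos.le rt)
  -- summing up
  have htail : (∑' j : {j : Zd d // (j₀:ℝ) < znorm j},
      ENNReal.ofReal (jb (znorm j.1) ^ (-N))) ≤ ENNReal.ofReal δ := by
    refine le_trans ?_ (le_of_lt (hs₀ s₀ le_rfl))
    exact ENNReal.tsum_mono_subtype (fun j => ENNReal.ofReal (jb (znorm j) ^ (-N))) hsub
  have hsum1 : (∑' j : {j : Zd d // (j₀:ℝ) < znorm j},
      ENNReal.ofReal ‖comm1 Θ b f g j.1‖ ^ rt)
        ≤ ENNReal.ofReal (M₁ ^ rt) * ENNReal.ofReal δ := by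
    calc (∑' j : {j : Zd d // (j₀:ℝ) < znorm j},
        ENNReal.ofReal ‖comm1 Θ b f g j.1‖ ^ rt)
        ≤ ∑' j : {j : Zd d // (j₀:ℝ) < znorm j},
            ENNReal.ofReal (M₁ ^ rt) * ENNReal.ofReal (jb (znorm j.1) ^ (-N)) :=
          ENNReal.tsum_le_tsum hptE
      _ = ENNReal.ofReal (M₁ ^ rt)
            * ∑' j : {j : Zd d // (j₀:ℝ) < znorm j},
                ENNReal.ofReal (jb (znorm j.1) ^ (-N)) := ENNReal.tsum_mul_left
      _ ≤ ENNReal.ofReal (M₁ ^ rt) * ENNReal.ofReal δ := mul_le_mul_right htail _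
  have hfinal : ((ENNReal.ofReal (M₁ ^ rt) * ENNReal.ofReal δ) : ℝ≥0∞) ^ (1/rt)
      ≤ ENNReal.ofReal (ε/2) := by
    rw [← ENNReal.ofReal_mul (Real.rpow_nonneg hM₁pos.le rt),
      ENNReal.ofReal_rpow_of_nonneg (mul_nonneg (Real.rpow_nonneg hM₁pos.le rt) hδpos.le)
        (by positivity)]
    apply ENNReal.ofReal_le_ofReal
    have h1 : M₁ ^ rt * δ ≤ (ε/2) ^ rt := by
      rw [hδdef, mul_div_assoc']
      rw [div_le_iff₀ (by linarith)]
      have hY : (0:ℝ) ≤ (ε/2) ^ rt := Real.rpow_nonneg (by linarith) rt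
      nlinarith
    calc (M₁ ^ rt * δ) ^ (1/rt) ≤ ((ε/2) ^ rt) ^ (1/rt) :=
          Real.rpow_le_rpow (mul_nonneg (Real.rpow_nonneg hM₁pos.le rt) hδpos.le) h1
            (by positivity)
      _ = ε/2 := by
          rw [← Real.rpow_mul (by linarith), mul_one_div, div_self (ne_of_gt hrt0),
            Real.rpow_one]
  calc (∑' j : {j : Zd d // (j₀:ℝ) < znorm j},
      ENNReal.ofReal ‖comm1 Θ b f g j.1‖ ^ rt) ^ (1/rt)
      ≤ ((ENNReal.ofReal (M₁ ^ rt) * ENNReal.ofReal δ) : ℝ≥0∞) ^ (1/rt) :=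
        ENNReal.rpow_le_rpow hsum1 (by positivity)
    _ ≤ ENNReal.ofReal (ε/2) := hfinal
    _ < ENNReal.ofReal ε := (ENNReal.ofReal_lt_ofReal_iff hε).mpr (by linarith)

end
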